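/- Let R be a commutative Noetherian local ring, let x, y ∈ R and let n ≥ 0 be an integer. For a finitely generated R-module M, the following are equivalent: (1) there is a short exact sequence of R-modules 0 → (R/(x))^n → M → R/(y) → 0; (2) there exist elements a₁, …, aₙ of the ideal quotient ((x) : (0 : y)) and an exact sequence R^{n+1} → R^{n+1} → M → 0 in which the first map is given by the matrix T(x, y, a₁, …, aₙ). -/

import Mathlib

open CategoryTheory

universe u

/-- A finitely generated module `M` over a commutative Noetherian local ring `R` is
*totally reflexive* if the natural evaluation map `M → Hom_R(Hom_R(M,R),R)` is an
isomorphism and `Ext_R^i(M, R) = 0 = Ext_R^i(Hom_R(M,R), R)` for all `i > 0`. -/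
def IsTotallyReflexive (R : Type u) [CommRing R] (M : Type u) [AddCommGroup M]
    [Module R M] : Prop :=
  Module.Finite R M ∧
  Function.Bijective (Module.Dual.eval R M) ∧
  (∀ i : ℕ, 0 < i →
    Subsingleton (((Ext R (ModuleCat.{u} R) i).obj
      (Opposite.op (ModuleCat.of R M))).obj (ModuleCat.of R R))) ∧
  (∀ i : ℕ, 0 < i →
    Subsingleton (((Ext R (ModuleCat.{u} R) i).obj
      (Opposite.op (ModuleCat.of R (Module.Dual R M)))).obj (ModuleCat.of R R)))

/-- A commutative Noetherian local ring is *G-regular* if every totally reflexive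
module over it is free. -/
def IsGRegular (R : Type u) [CommRing R] : Prop :=
  ∀ (M : Type u) (_ : AddCommGroup M) (_ : Module R M),
    IsTotallyReflexive R M → Module.Free R M

/-- `{x, y}` is a *pair of exact zerodivisors* of the local ring `R` if `x` and `y` are
nonunits (i.e. belong to the maximal ideal) with `(0 : x) = (y)` and `(0 : y) = (x)`. -/
def IsExactZerodivisorPair (R : Type u) [CommRing R] (x y : R) : Prop :=
  ¬ IsUnit x ∧ ¬ IsUnit y ∧
  (∀ r : R, r * x = 0 ↔ r ∈ Ideal.span {y}) ∧
  (∀ r : R, r * y = 0 ↔ r ∈ Ideal.span {x})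

/-- An `R`-module `M` is *indecomposable* if `M ≠ 0` and `M` is not isomorphic to the
direct sum of two nonzero `R`-modules (equivalently, `M` has no pair of complementary
nonzero submodules). -/
def IsIndecomposable (R : Type u) [CommRing R] (M : Type*) [AddCommGroup M]
    [Module R M] : Prop :=
  Nontrivial M ∧
  ¬ ∃ P Q : Submodule R M, IsCompl P Q ∧ P ≠ ⊥ ∧ Q ≠ ⊥

/-- The minimal number of generators of an ideal. -/
noncomputable def nu (A : Type u) [CommRing A] (J : Ideal A) : ℕ :=
  sInf {n : ℕ | ∃ s : Finset A, s.card = n ∧ Ideal.span (s : Set A) = J}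

/-- The invariant `s(x,y)`: the supremum in `ℕ ∪ {∞}` of the numbers
`ν_{R/(x,y)}(I(R/(x,y)))` over all ideals `I` of `R`. -/
noncomputable def sInvariant (R : Type u) [CommRing R] (x y : R) : ℕ∞ :=
  ⨆ I : Ideal R,
    (nu (R ⧸ Ideal.span {x, y}) (I.map (Ideal.Quotient.mk (Ideal.span {x, y}))) : ℕ∞)

/-- The height of an ideal: the infimum of the heights of the prime ideals containing it. -/
noncomputable def idealHeight (A : Type u) [CommRing A] (J : Ideal A) : ℕ∞ :=
  ⨅ p : {p : PrimeSpectrum A // J ≤ p.asIdeal}, Order.height p.1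

/-- The `(n+1) × (n+1)` matrix `T(x, y, a₁, …, aₙ)`, with `x` on the first `n` diagonal
entries, `y` in the lower-right corner, the `aᵢ` in the last column, and zeros elsewhere. -/
def Tmatrix {R : Type u} [CommRing R] (n : ℕ) (x y : R) (a : Fin n → R) :
    Matrix (Fin (n + 1)) (Fin (n + 1)) R :=
  Matrix.of fun i j =>
    if hi : (i : ℕ) < n then
      if (j : ℕ) < n then (if i = j then x else 0) else a ⟨i, hi⟩
    else
      if (j : ℕ) < n then 0 else y
section helpers
variable {R : Type u} [CommRing R]

lemma Tmul_last (n : ℕ) (x y : R) (a : Fin n → R) (w : Fin (n+1) → R) :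
    (Tmatrix n x y a).mulVec w (Fin.last n) = y * w (Fin.last n) := by
  simp only [Matrix.mulVec, dotProduct, Tmatrix, Matrix.of_apply]
  rw [Fin.sum_univ_castSucc]
  simp [Fin.is_lt]

lemma Tmul_castSucc (n : ℕ) (x y : R) (a : Fin n → R) (w : Fin (n+1) → R) (i : Fin n) :
    (Tmatrix n x y a).mulVec w (Fin.castSucc i)
      = x * w (Fin.castSucc i) + a i * w (Fin.last n) := by
  simp only [Matrix.mulVec, dotProduct, Tmatrix, Matrix.of_apply]
  rw [Fin.sum_univ_castSucc]
  simp only [Fin.coe_castSucc, Fin.val_last, Fin.is_lt, dite_true, dif_pos, lt_irrefl,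
    if_false, ite_false, Fin.castSucc_inj, Fin.eta]
  rw [Finset.sum_eq_single i]
  · simp
  · intro b _ hb; simp [Ne.symm hb]
  · simp

lemma sum_single_snoc (n : ℕ) (u : Fin n → R) :
    ∑ i : Fin n, u i • Pi.single (M := fun _ : Fin (n+1) => R) (Fin.castSucc i) (1:R)
      = (Fin.snoc u 0 : Fin (n+1) → R) := by
  funext j
  rw [Finset.sum_apply]
  refine Fin.lastCases ?_ ?_ j
  · rw [Fin.snoc_last]
    refine Finset.sum_eq_zero fun i _ => ?_
    rw [Pi.smul_apply, Pi.single_eq_of_ne (Fin.castSucc_lt_last i).ne', smul_zero]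
  · intro k
    rw [Fin.snoc_castSucc, Finset.sum_eq_single k]
    · rw [Pi.smul_apply, Pi.single_eq_same, smul_eq_mul, mul_one]
    · intro b _ hb
      rw [Pi.smul_apply, Pi.single_eq_of_ne (by simpa [Fin.castSucc_inj] using hb.symm), smul_zero]
    · simp

end helpers

/-- **Lemma 3.3.**  Let `R` be a commutative Noetherian local ring, `x, y ∈ R` and `n ≥ 0`.
For a finitely generated `R`-module `M` the following are equivalent: (1) there is an exact
sequence `0 → (R/(x))^n → M → R/(y) → 0`; (2) there is an exact sequence
`R^{n+1} → R^{n+1} → M → 0` whose first map is given by the matrix `T(x,y,a₁,…,aₙ)` for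
some `a₁, …, aₙ ∈ ((x) : (0 : y))`. -/
theorem extension_iff_Tmatrix_presentation (R : Type u) [CommRing R] [IsNoetherianRing R]
    [IsLocalRing R] (x y : R) (n : ℕ)
    (M : Type u) [AddCommGroup M] [Module R M] [Module.Finite R M] :
    (∃ (f : (Fin n → R ⧸ Ideal.span ({x} : Set R)) →ₗ[R] M)
       (g : M →ₗ[R] R ⧸ Ideal.span ({y} : Set R)),
      Function.Injective f ∧ Function.Surjective g ∧
      LinearMap.range f = LinearMap.ker g) ↔
    (∃ a : Fin n → R,
      (∀ i, a i ∈ (Ideal.span ({x} : Set R)).colon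
        ((⊥ : Ideal R).colon (Ideal.span ({y} : Set R)))) ∧
      ∃ p : (Fin (n + 1) → R) →ₗ[R] M,
        Function.Surjective p ∧
        LinearMap.ker p = LinearMap.range (Matrix.toLin' (Tmatrix n x y a))) := by
  constructor
  · rintro ⟨f, g, hf, hg, hfg⟩
    obtain ⟨m0, hm0⟩ := hg (Submodule.Quotient.mk 1)
    have hgf0 : ∀ z, g (f z) = 0 := fun z =>
      LinearMap.mem_ker.mp (hfg ▸ LinearMap.mem_range_self f z)
    have hym0 : -(y • m0) ∈ LinearMap.range f := by
      rw [hfg, LinearMap.mem_ker, map_neg, map_smul, hm0, ← Submodule.Quotient.mk_smul,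
        smul_eq_mul, mul_one]
      rw [Submodule.Quotient.mk_eq_zero _ |>.mpr (Ideal.mem_span_singleton_self y), neg_zero]
    obtain ⟨v, hv⟩ := hym0
    choose b hb using fun i => Submodule.Quotient.mk_surjective (Ideal.span ({x} : Set R)) (v i)
    set p : (Fin (n+1) → R) →ₗ[R] M :=
      (f.comp (LinearMap.pi fun i =>
        (Ideal.span ({x} : Set R)).mkQ.comp (LinearMap.proj (Fin.castSucc i)))) +
      (LinearMap.toSpanSingleton R M m0).comp (LinearMap.proj (Fin.last n)) with hpdef
    have hpw : ∀ w : Fin (n+1) → R,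
        p w = f (fun i => Submodule.Quotient.mk (w (Fin.castSucc i))) + w (Fin.last n) • m0 := by
      intro w
      rw [hpdef, LinearMap.add_apply, LinearMap.comp_apply, LinearMap.comp_apply,
        LinearMap.proj_apply, LinearMap.toSpanSingleton_apply]
      have hw : (LinearMap.pi fun i =>
          (Ideal.span ({x} : Set R)).mkQ.comp (LinearMap.proj (Fin.castSucc i))) w
          = fun i => Submodule.Quotient.mk (w (Fin.castSucc i)) := by
        funext i
        simp [LinearMap.pi_apply]
      rw [hw]
    refine ⟨b, ?_, p, ?_, ?_⟩
    · intro i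
      rw [Submodule.mem_colon]
      intro r hr
      have hry : r * y = 0 := by
        have := Submodule.mem_colon.mp hr y (Ideal.mem_span_singleton_self y)
        simpa using this
      have h1 : f (r • v) = 0 := by
        rw [map_smul, hv, smul_neg, smul_smul, hry, zero_smul, neg_zero]
      have h2 : r • v = 0 := hf (by rw [h1, map_zero])
      have h3 := congrFun h2 i
      rw [Pi.smul_apply, ← hb i, ← Submodule.Quotient.mk_smul] at h3
      have h4 : r • b i ∈ Ideal.span ({x} : Set R) := (Submodule.Quotient.mk_eq_zero _).mp h3
      rw [smul_eq_mul] at h4 ⊢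
      rwa [mul_comm]
    · intro m
      obtain ⟨c, hc⟩ := Submodule.Quotient.mk_surjective _ (g m)
      have hmem : m - c • m0 ∈ LinearMap.range f := by
        rw [hfg, LinearMap.mem_ker, map_sub, map_smul, hm0, ← hc,
          ← Submodule.Quotient.mk_smul, smul_eq_mul, mul_one, sub_self]
      obtain ⟨v', hv'⟩ := hmem
      choose u hu using fun i => Submodule.Quotient.mk_surjective (Ideal.span ({x} : Set R)) (v' i)
      refine ⟨Fin.snoc u c, ?_⟩
      rw [hpw]
      simp only [Fin.snoc_castSucc, Fin.snoc_last]
      rw [show (fun i => (Submodule.Quotient.mk (u i) : R ⧸ Ideal.span ({x} : Set R))) = v'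
        from funext hu, hv', sub_add_cancel]
    · ext w
      rw [LinearMap.mem_ker, LinearMap.mem_range]
      constructor
      · intro hw
        rw [hpw] at hw
        have hw' := eq_neg_of_add_eq_zero_left hw
        have hg0 : (Submodule.Quotient.mk (w (Fin.last n)) : R ⧸ Ideal.span ({y} : Set R)) = 0 := by
          have := congrArg g hw
          rw [map_add, hgf0, zero_add, map_smul, hm0, map_zero,
            ← Submodule.Quotient.mk_smul, smul_eq_mul, mul_one] at this
          exact this
        obtain ⟨s, hs⟩ := Ideal.mem_span_singleton.mp ((Submodule.Quotient.mk_eq_zero _).mp hg0)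
        have h5 : f (fun i => Submodule.Quotient.mk (w (Fin.castSucc i)))
            = f (fun i => Submodule.Quotient.mk (s * b i)) := by
          rw [hw', show (fun i => (Submodule.Quotient.mk (s * b i) : R ⧸ Ideal.span ({x} : Set R)))
            = s • v from funext fun i => by
              rw [Pi.smul_apply, ← hb i, ← Submodule.Quotient.mk_smul, smul_eq_mul],
            map_smul, hv, smul_neg, smul_smul, mul_comm s y, ← hs]
        have h6 := hf h5
        have h7 : ∀ i, w (Fin.castSucc i) - s * b i ∈ Ideal.span ({x} : Set R) := fun i =>
          (Submodule.Quotient.eq _).mp (congrFun h6 i)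
        choose t ht using fun i => Ideal.mem_span_singleton.mp (h7 i)
        refine ⟨Fin.snoc t s, ?_⟩
        rw [Matrix.toLin'_apply]
        funext j
        refine Fin.lastCases ?_ ?_ j
        · rw [Tmul_last, Fin.snoc_last, ← hs]
        · intro k
          rw [Tmul_castSucc, Fin.snoc_castSucc, Fin.snoc_last]
          linear_combination - ht k
      · rintro ⟨w', rfl⟩
        rw [Matrix.toLin'_apply, hpw]
        have h8 : (fun i => (Submodule.Quotient.mk ((Tmatrix n x y b).mulVec w' (Fin.castSucc i))
            : R ⧸ Ideal.span ({x} : Set R))) = w' (Fin.last n) • v := by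
          funext i
          rw [Tmul_castSucc, Pi.smul_apply, ← hb i, ← Submodule.Quotient.mk_smul,
            Submodule.Quotient.eq, smul_eq_mul]
          rw [show x * w' (Fin.castSucc i) + b i * w' (Fin.last n) - w' (Fin.last n) * b i
            = x * w' (Fin.castSucc i) by ring]
          exact Ideal.mul_mem_right _ _ (Ideal.mem_span_singleton_self x)
        rw [h8, map_smul, hv, Tmul_last, smul_neg, smul_smul, mul_comm (w' (Fin.last n)) y,
          neg_add_cancel]
  · rintro ⟨a, ha, p, hp, hker⟩
    have hkermem : ∀ w, w ∈ LinearMap.ker p ↔ ∃ w', (Tmatrix n x y a).mulVec w' = w := by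
      intro w
      rw [hker, LinearMap.mem_range]
      simp only [Matrix.toLin'_apply]
    have hp0 : ∀ w', p ((Tmatrix n x y a).mulVec w') = 0 := by
      intro w'
      exact LinearMap.mem_ker.mp ((hkermem _).mpr ⟨w', rfl⟩)
    have hcond : ∀ i : Fin n, Ideal.span ({x} : Set R) ≤
        LinearMap.ker (LinearMap.toSpanSingleton R M (p (Pi.single (Fin.castSucc i) 1))) := by
      intro i
      rw [Ideal.span_le, Set.singleton_subset_iff]
      simp only [SetLike.mem_coe, LinearMap.mem_ker, LinearMap.toSpanSingleton_apply]
      rw [← map_smul]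
      have hxe : x • Pi.single (M := fun _ : Fin (n+1) => R) (Fin.castSucc i) (1:R)
          = (Tmatrix n x y a).mulVec (Pi.single (Fin.castSucc i) 1) := by
        funext j
        refine Fin.lastCases ?_ ?_ j
        · rw [Tmul_last, Pi.smul_apply, Pi.single_eq_of_ne (Fin.castSucc_lt_last i).ne',
            smul_zero, mul_zero]
        · intro k
          rw [Tmul_castSucc, Pi.smul_apply, Pi.single_eq_of_ne (Fin.castSucc_lt_last i).ne',
            mul_zero, add_zero, smul_eq_mul]
      rw [hxe, hp0]
    set f := LinearMap.lsum R (fun _ : Fin n => R ⧸ Ideal.span ({x} : Set R)) R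
      (fun i => Submodule.liftQ _
        (LinearMap.toSpanSingleton R M (p (Pi.single (Fin.castSucc i) 1))) (hcond i)) with hfdef
    have f_mk : ∀ u : Fin n → R,
        f (fun i => Submodule.Quotient.mk (u i)) = p (Fin.snoc u 0) := by
      intro u
      rw [hfdef]
      rw [LinearMap.lsum_apply]
      rw [LinearMap.sum_apply]
      simp only [LinearMap.comp_apply, LinearMap.proj_apply, Submodule.liftQ_apply,
        LinearMap.toSpanSingleton_apply]
      rw [Finset.sum_congr rfl fun i _ => (map_smul p (u i) _).symm, ← map_sum,
        sum_single_snoc n u]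
    have hle : LinearMap.ker p ≤ LinearMap.ker
        ((Ideal.span ({y} : Set R)).mkQ.comp (LinearMap.proj (Fin.last n))) := by
      intro w hw
      obtain ⟨w', rfl⟩ := (hkermem w).mp hw
      rw [LinearMap.mem_ker, LinearMap.comp_apply, LinearMap.proj_apply, Submodule.mkQ_apply,
        Tmul_last, Submodule.Quotient.mk_eq_zero]
      exact Ideal.mul_mem_right _ _ (Ideal.mem_span_singleton_self y)
    set e := p.quotKerEquivOfSurjective hp with hedef
    have he : ∀ w, e (Submodule.Quotient.mk w) = p w := by
      intro w
      rfl
    set g := (Submodule.liftQ (LinearMap.ker p)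
      ((Ideal.span ({y} : Set R)).mkQ.comp (LinearMap.proj (Fin.last n))) hle).comp
      e.symm.toLinearMap with hgdef
    have hgp : ∀ w, g (p w) = Submodule.Quotient.mk (w (Fin.last n)) := by
      intro w
      have hsymm : e.symm (p w) = Submodule.Quotient.mk w := by
        rw [← he w, LinearEquiv.symm_apply_apply]
      rw [hgdef, LinearMap.comp_apply, LinearEquiv.coe_toLinearMap, hsymm,
        Submodule.liftQ_apply, LinearMap.comp_apply, LinearMap.proj_apply, Submodule.mkQ_apply]
    refine ⟨f, g, ?_, ?_, ?_⟩
    · refine (injective_iff_map_eq_zero f).mpr ?_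
      intro v hv0
      choose u hu using fun i => Submodule.Quotient.mk_surjective (Ideal.span ({x} : Set R)) (v i)
      have hpz : p (Fin.snoc u 0) = 0 := by
        rw [← f_mk, show (fun i => (Submodule.Quotient.mk (u i) : R ⧸ Ideal.span ({x} : Set R)))
          = v from funext hu, hv0]
      obtain ⟨w', hw'⟩ := (hkermem _).mp (LinearMap.mem_ker.mpr hpz)
      have hlast : w' (Fin.last n) * y = 0 := by
        have hl := congrFun hw' (Fin.last n)
        rw [Tmul_last, Fin.snoc_last] at hl
        rw [mul_comm]; exact hl
      have hann : w' (Fin.last n) ∈ (⊥ : Ideal R).colon (Ideal.span {y}) :=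
        Ideal.mem_colon_span_singleton.mpr (by rw [hlast]; exact Ideal.zero_mem ⊥)
      funext i
      simp only [Pi.zero_apply]
      rw [← hu i, Submodule.Quotient.mk_eq_zero]
      have hci := congrFun hw' (Fin.castSucc i)
      rw [Tmul_castSucc, Fin.snoc_castSucc] at hci
      rw [← hci]
      refine add_mem (Ideal.mul_mem_right _ _ (Ideal.mem_span_singleton_self x)) ?_
      have := Submodule.mem_colon.mp (ha i) _ hann
      rwa [smul_eq_mul] at this
    · intro c
      obtain ⟨r, hr⟩ := Submodule.Quotient.mk_surjective _ c
      refine ⟨p (Pi.single (Fin.last n) r), ?_⟩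
      rw [hgp, Pi.single_eq_same, hr]
    · ext m
      rw [LinearMap.mem_range, LinearMap.mem_ker]
      constructor
      · rintro ⟨v, rfl⟩
        choose u hu using fun i => Submodule.Quotient.mk_surjective (Ideal.span ({x} : Set R)) (v i)
        rw [show v = fun i => (Submodule.Quotient.mk (u i) : R ⧸ Ideal.span ({x} : Set R))
          from (funext hu).symm, f_mk, hgp, Fin.snoc_last]
        exact (Submodule.Quotient.mk_eq_zero _).mpr (Ideal.zero_mem _)
      · intro hm
        obtain ⟨w, rfl⟩ := hp m
        rw [hgp] at hm
        obtain ⟨s, hs⟩ := Ideal.mem_span_singleton.mp ((Submodule.Quotient.mk_eq_zero _).mp hm)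
        refine ⟨fun i => Submodule.Quotient.mk (w (Fin.castSucc i) - a i * s), ?_⟩
        rw [f_mk]
        have hsnoc : Fin.snoc (fun i => w (Fin.castSucc i) - a i * s) (0:R)
            = w - (Tmatrix n x y a).mulVec (Pi.single (Fin.last n) s) := by
          funext j
          refine Fin.lastCases ?_ ?_ j
          · rw [Fin.snoc_last, Pi.sub_apply, Tmul_last, Pi.single_eq_same, hs, sub_self]
          · intro k
            rw [Fin.snoc_castSucc, Pi.sub_apply, Tmul_castSucc, Pi.single_eq_same,
              Pi.single_eq_of_ne (Fin.castSucc_lt_last k).ne]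
            ring
        rw [hsnoc, map_sub, hp0, sub_zero]
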